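/- For the timelike multiplier M = r²φ⁻² ∂_r on the expanding region of Schwarzschild-de Sitter, the contraction of the deformation tensor of M with the stress-energy tensor of a scalar field ψ equals K^M[ψ] = -2r(∂_tψ)² - r((2Λ/3)r² - 1 + m/r)|∇̸ψ|², and hence K^M[ψ] ≤ 0 everywhere on the expanding region. -/

import Mathlib

noncomputable section

/-- Partial derivative `∂_μ f` in coordinates `(x 0, x 1, x 2, x 3) = (r,t,θ,φ)`. -/
def pd (f : (Fin 4 → ℝ) → ℝ) (μ : Fin 4) (x : Fin 4 → ℝ) : ℝ :=
  deriv (fun s => f (Function.update x μ s)) (x μ)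

/-- The Schwarzschild-de Sitter metric on the expanding region. -/
def gSdS (Λ m : ℝ) (x : Fin 4 → ℝ) (i j : Fin 4) : ℝ :=
  if i = j then
    (if i = 0 then -(Λ * (x 0) ^ 2 / 3 - 1 + 2 * m / x 0)⁻¹
     else if i = 1 then Λ * (x 0) ^ 2 / 3 - 1 + 2 * m / x 0
     else if i = 2 then (x 0) ^ 2
     else (x 0) ^ 2 * Real.sin (x 2) ^ 2)
  else 0

/-- The inverse metric (diagonal). -/
def gInv (Λ m : ℝ) (x : Fin 4 → ℝ) (i j : Fin 4) : ℝ :=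
  if i = j then (gSdS Λ m x i i)⁻¹ else 0

/-- Christoffel symbols of the Schwarzschild-de Sitter metric. -/
def Γsds (Λ m : ℝ) (l μ ν : Fin 4) (x : Fin 4 → ℝ) : ℝ :=
  (1 / 2) * (gSdS Λ m x l l)⁻¹ *
    (pd (fun y => gSdS Λ m y l ν) μ x + pd (fun y => gSdS Λ m y l μ) ν x
      - pd (fun y => gSdS Λ m y μ ν) l x)

/-- The timelike multiplier `M = r²φ⁻² ∂_r`. -/
def Mvec (Λ m : ℝ) (x : Fin 4 → ℝ) (i : Fin 4) : ℝ :=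
  if i = 0 then (x 0) ^ 2 * (Λ * (x 0) ^ 2 / 3 - 1 + 2 * m / x 0) else 0

/-- The deformation tensor `π^{μν} = ½(∇^μ M^ν + ∇^ν M^μ)` of `M`. -/
def defT (Λ m : ℝ) (x : Fin 4 → ℝ) (μ ν : Fin 4) : ℝ :=
  (1 / 2) *
    ((∑ l : Fin 4, gInv Λ m x μ l * pd (fun y => Mvec Λ m y ν) l x)
      + (∑ l : Fin 4, gInv Λ m x ν l * pd (fun y => Mvec Λ m y μ) l x)
      + (∑ l : Fin 4, ∑ η : Fin 4, gInv Λ m x μ l * Γsds Λ m ν l η x * Mvec Λ m x η)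
      + (∑ l : Fin 4, ∑ η : Fin 4, gInv Λ m x ν l * Γsds Λ m μ l η x * Mvec Λ m x η))

/-- The stress-energy tensor `T_{μν}[ψ] = ∂_μψ∂_νψ - ½ g_{μν} ∂^αψ∂_αψ`. -/
def stressT (Λ m : ℝ) (ψ : (Fin 4 → ℝ) → ℝ) (x : Fin 4 → ℝ) (μ ν : Fin 4) : ℝ :=
  pd ψ μ x * pd ψ ν x
    - (1 / 2) * gSdS Λ m x μ ν *
        ∑ a : Fin 4, ∑ b : Fin 4, gInv Λ m x a b * pd ψ a x * pd ψ b x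

/-- The bulk energy current `K^M[ψ] = π^{μν} T_{μν}[ψ]`. -/
def KM (Λ m : ℝ) (ψ : (Fin 4 → ℝ) → ℝ) (x : Fin 4 → ℝ) : ℝ :=
  ∑ μ : Fin 4, ∑ ν : Fin 4, defT Λ m x μ ν * stressT Λ m ψ x μ ν

lemma pd_zero (μ : Fin 4) (x : Fin 4 → ℝ) : pd (fun _ => (0:ℝ)) μ x = 0 := by
  simp [pd]

set_option maxHeartbeats 4000000 in
/-- **Nonpositivity of the bulk current of the multiplier `M = r²φ⁻²∂_r`.**
On the expanding region `r > r_C` of subextremal Schwarzschild-de Sitter,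
`K^M[ψ] = -2r(∂_tψ)² - r((2Λ/3)r² - 1 + m/r)|∇̸ψ|² ≤ 0`, where
`|∇̸ψ|² = r⁻²(∂_θψ)² + r⁻²sin⁻²θ(∂_φψ)²`. -/
theorem stmt_12 (Λ m rC : ℝ) (hΛ : 0 < Λ) (hm : 0 < m)
    (hsub : 3 * m * Real.sqrt Λ < 1)
    (hrC : 0 < rC) (hroot : Λ * rC ^ 2 / 3 - 1 + 2 * m / rC = 0)
    (hlargest : ∀ r : ℝ, 0 < r → Λ * r ^ 2 / 3 - 1 + 2 * m / r = 0 → r ≤ rC)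
    (ψ : (Fin 4 → ℝ) → ℝ) (x : Fin 4 → ℝ) (hr : rC < x 0)
    (hs : Real.sin (x 2) ≠ 0) :
    KM Λ m ψ x
      = -2 * x 0 * (pd ψ 1 x) ^ 2
        - x 0 * (2 * Λ / 3 * (x 0) ^ 2 - 1 + m / x 0) *
            ((pd ψ 2 x) ^ 2 / (x 0) ^ 2
              + (pd ψ 3 x) ^ 2 / ((x 0) ^ 2 * Real.sin (x 2) ^ 2)) ∧
    KM Λ m ψ x ≤ 0 := by
  have hQpos : ∀ s : ℝ, rC < s → 0 < Λ * s ^ 2 / 3 - 1 + 2 * m / s := by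
    intro s hsC
    by_contra hle
    push_neg at hle
    obtain ⟨R, hsR, hRs⟩ : ∃ R : ℝ, s ≤ R ∧ Real.sqrt (3 / Λ) < R := by
      refine ⟨max s (Real.sqrt (3 / Λ)) + 1, ?_, ?_⟩
      · have := le_max_left s (Real.sqrt (3 / Λ)); linarith
      · have := le_max_right s (Real.sqrt (3 / Λ)); linarith
    have hR0 : 0 < R := lt_of_le_of_lt (Real.sqrt_nonneg _) hRs
    have hR2 : 3 / Λ < R ^ 2 := by
      nlinarith [Real.sq_sqrt (by positivity : (0:ℝ) ≤ 3 / Λ), Real.sqrt_nonneg (3 / Λ)]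
    have hqR : 0 < Λ * R ^ 2 / 3 - 1 + 2 * m / R := by
      have h3 : 3 < Λ * R ^ 2 := by rw [div_lt_iff₀ hΛ] at hR2; nlinarith
      have h4 : 0 < 2 * m / R := by positivity
      nlinarith [h3, h4]
    have hspos : 0 < s := hrC.trans hsC
    have hcont : ContinuousOn (fun t : ℝ => Λ * t ^ 2 / 3 - 1 + 2 * m / t) (Set.Icc s R) := by
      apply ContinuousOn.add
      · fun_prop
      · apply ContinuousOn.div continuousOn_const continuousOn_id
        intro t ht
        exact ne_of_gt (lt_of_lt_of_le hspos ht.1)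
    have hmem : (0:ℝ) ∈ Set.Icc (Λ * s ^ 2 / 3 - 1 + 2 * m / s) (Λ * R ^ 2 / 3 - 1 + 2 * m / R) :=
      ⟨hle, hqR.le⟩
    obtain ⟨t, ht, hqt⟩ := intermediate_value_Icc hsR hcont hmem
    replace hqt : Λ * t ^ 2 / 3 - 1 + 2 * m / t = 0 := hqt
    have htC : rC < t := lt_of_lt_of_le hsC ht.1
    exact absurd (hlargest t (hrC.trans htC) hqt) (not_le.mpr htC)
  have hQx : 0 < Λ * (x 0) ^ 2 / 3 - 1 + 2 * m / (x 0) := hQpos (x 0) hr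
  have h9 : 9 * (m * m) * Λ < 1 := by
    nlinarith [Real.sq_sqrt hΛ.le, Real.sqrt_nonneg Λ,
      mul_pos (by positivity : (0:ℝ) < 1 + 3 * m * Real.sqrt Λ)
        (by linarith : (0:ℝ) < 1 - 3 * m * Real.sqrt Λ)]
  have hq3m : Λ * (3 * m) ^ 2 / 3 - 1 + 2 * m / (3 * m) = 3 * Λ * m ^ 2 - 1 / 3 := by
    field_simp
    ring
  have h3m : 3 * m < rC := by
    rcases lt_trichotomy (3 * m) rC with h | h | h
    · exact h
    · exfalso; rw [← h, hq3m] at hroot; nlinarith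
    · exfalso; have := hQpos (3 * m) h; rw [hq3m] at this; nlinarith
  have hx0 : 0 < x 0 := hrC.trans hr
  have hcube : Λ * rC ^ 3 / 3 = rC - 2 * m := by
    have h := hroot
    field_simp at h
    nlinarith [h]
  have hPpos : 0 < 2 * Λ / 3 * (x 0) ^ 2 - 1 + m / (x 0) := by
    have h2 : rC ^ 3 < (x 0) ^ 3 := pow_lt_pow_left₀ hr hrC.le (by norm_num)
    have hc : m < Λ * (x 0) ^ 3 / 3 := by nlinarith
    have hpos2 : 0 < (Λ * (x 0) ^ 3 / 3 - m) / (x 0) := div_pos (by linarith) hx0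
    have hexp : 2 * Λ / 3 * (x 0) ^ 2 - 1 + m / (x 0)
        = (Λ * (x 0) ^ 2 / 3 - 1 + 2 * m / (x 0)) + (Λ * (x 0) ^ 3 / 3 - m) / (x 0) := by
      field_simp
      ring
    rw [hexp]; linarith
  have hQne : Λ * x 0 ^ 2 / 3 - 1 + 2 * m / x 0 ≠ 0 := ne_of_gt hQx
  have hx0' : x 0 ≠ 0 := ne_of_gt hx0
  -- derivative of s^2
  have hpow : HasDerivAt (fun s : ℝ => s ^ 2) (2 * x 0) (x 0) := by
    simpa using hasDerivAt_pow 2 (x 0)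
  -- derivative of Q
  have hq : HasDerivAt (fun s : ℝ => Λ * s ^ 2 / 3 - 1 + 2 * m / s)
      (2 * Λ * x 0 / 3 - 2 * m / x 0 ^ 2) (x 0) := by
    have h2 : HasDerivAt (fun s : ℝ => 2 * m / s) (-(2 * m) / x 0 ^ 2) (x 0) := by
      have h := (hasDerivAt_const (x 0) (2 * m)).div (hasDerivAt_id (x 0)) hx0'
      refine h.congr_deriv ?_
      simp
    have h3 := (((hpow.const_mul Λ).div_const 3).sub_const 1).add h2
    refine h3.congr_deriv ?_
    ring
  -- derivative of g00 = -(Q)⁻¹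
  have hg00 : HasDerivAt (fun s : ℝ => -(Λ * s ^ 2 / 3 - 1 + 2 * m / s)⁻¹)
      ((2 * Λ * x 0 / 3 - 2 * m / x 0 ^ 2) / (Λ * x 0 ^ 2 / 3 - 1 + 2 * m / x 0) ^ 2) (x 0) := by
    have h := (hq.inv hQne).neg
    refine h.congr_deriv ?_
    ring
  -- derivative of Mvec0 = s^2 * Q
  have hgM : HasDerivAt (fun s : ℝ => s ^ 2 * (Λ * s ^ 2 / 3 - 1 + 2 * m / s))
      (2 * x 0 * (Λ * x 0 ^ 2 / 3 - 1 + 2 * m / x 0)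
        + x 0 ^ 2 * (2 * Λ * x 0 / 3 - 2 * m / x 0 ^ 2)) (x 0) := by
    have h := hpow.mul hq
    exact h
  -- pd helpers
  have key0 : ∀ (g : ℝ → ℝ) (d : ℝ), HasDerivAt g d (x 0) →
      pd (fun y => g (y 0)) 0 x = d := by
    intro g d hd
    show deriv (fun s => g (Function.update x 0 s 0)) (x 0) = d
    simp only [Function.update_self]
    exact hd.deriv
  have keyne : ∀ (g : ℝ → ℝ) (μ : Fin 4), μ ≠ 0 →
      pd (fun y => g (y 0)) μ x = 0 := by
    intro g μ hμ
    show deriv (fun s => g (Function.update x μ s 0)) (x μ) = 0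
    simp [Function.update_of_ne hμ.symm]
  -- the pd facts
  have p00_0 : pd (fun y => -(Λ * y 0 ^ 2 / 3 - 1 + 2 * m / y 0)⁻¹) 0 x
      = (2 * Λ * x 0 / 3 - 2 * m / x 0 ^ 2) / (Λ * x 0 ^ 2 / 3 - 1 + 2 * m / x 0) ^ 2 :=
    key0 _ _ hg00
  have p00_1 : pd (fun y => -(Λ * y 0 ^ 2 / 3 - 1 + 2 * m / y 0)⁻¹) 1 x = 0 :=
    keyne (fun s => -(Λ * s ^ 2 / 3 - 1 + 2 * m / s)⁻¹) 1 (by decide)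
  have p00_2 : pd (fun y => -(Λ * y 0 ^ 2 / 3 - 1 + 2 * m / y 0)⁻¹) 2 x = 0 :=
    keyne (fun s => -(Λ * s ^ 2 / 3 - 1 + 2 * m / s)⁻¹) 2 (by decide)
  have p00_3 : pd (fun y => -(Λ * y 0 ^ 2 / 3 - 1 + 2 * m / y 0)⁻¹) 3 x = 0 :=
    keyne (fun s => -(Λ * s ^ 2 / 3 - 1 + 2 * m / s)⁻¹) 3 (by decide)
  have p11_0 : pd (fun y => Λ * y 0 ^ 2 / 3 - 1 + 2 * m / y 0) 0 x
      = 2 * Λ * x 0 / 3 - 2 * m / x 0 ^ 2 := key0 _ _ hq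
  have p11_1 : pd (fun y => Λ * y 0 ^ 2 / 3 - 1 + 2 * m / y 0) 1 x = 0 :=
    keyne (fun s => Λ * s ^ 2 / 3 - 1 + 2 * m / s) 1 (by decide)
  have p11_2 : pd (fun y => Λ * y 0 ^ 2 / 3 - 1 + 2 * m / y 0) 2 x = 0 :=
    keyne (fun s => Λ * s ^ 2 / 3 - 1 + 2 * m / s) 2 (by decide)
  have p11_3 : pd (fun y => Λ * y 0 ^ 2 / 3 - 1 + 2 * m / y 0) 3 x = 0 :=
    keyne (fun s => Λ * s ^ 2 / 3 - 1 + 2 * m / s) 3 (by decide)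
  have p22_0 : pd (fun y => y 0 ^ 2) 0 x = 2 * x 0 := key0 _ _ hpow
  have p22_1 : pd (fun y => y 0 ^ 2) 1 x = 0 := keyne (fun s => s ^ 2) 1 (by decide)
  have p22_2 : pd (fun y => y 0 ^ 2) 2 x = 0 := keyne (fun s => s ^ 2) 2 (by decide)
  have p22_3 : pd (fun y => y 0 ^ 2) 3 x = 0 := keyne (fun s => s ^ 2) 3 (by decide)
  have pM_0 : pd (fun y => y 0 ^ 2 * (Λ * y 0 ^ 2 / 3 - 1 + 2 * m / y 0)) 0 x
      = 2 * x 0 * (Λ * x 0 ^ 2 / 3 - 1 + 2 * m / x 0)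
        + x 0 ^ 2 * (2 * Λ * x 0 / 3 - 2 * m / x 0 ^ 2) := key0 _ _ hgM
  have pM_1 : pd (fun y => y 0 ^ 2 * (Λ * y 0 ^ 2 / 3 - 1 + 2 * m / y 0)) 1 x = 0 :=
    keyne (fun s => s ^ 2 * (Λ * s ^ 2 / 3 - 1 + 2 * m / s)) 1 (by decide)
  have pM_2 : pd (fun y => y 0 ^ 2 * (Λ * y 0 ^ 2 / 3 - 1 + 2 * m / y 0)) 2 x = 0 :=
    keyne (fun s => s ^ 2 * (Λ * s ^ 2 / 3 - 1 + 2 * m / s)) 2 (by decide)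
  have pM_3 : pd (fun y => y 0 ^ 2 * (Λ * y 0 ^ 2 / 3 - 1 + 2 * m / y 0)) 3 x = 0 :=
    keyne (fun s => s ^ 2 * (Λ * s ^ 2 / 3 - 1 + 2 * m / s)) 3 (by decide)
  -- g33 = r² sin²θ
  have p33_0 : pd (fun y => y 0 ^ 2 * Real.sin (y 2) ^ 2) 0 x
      = 2 * x 0 * Real.sin (x 2) ^ 2 := by
    show deriv (fun s => (Function.update x 0 s 0) ^ 2
      * Real.sin (Function.update x 0 s 2) ^ 2) (x 0) = _
    simp only [Function.update_self, Function.update_of_ne (show (2:Fin 4) ≠ 0 by decide)]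
    exact (hpow.mul_const _).deriv
  have p33_2 : pd (fun y => y 0 ^ 2 * Real.sin (y 2) ^ 2) 2 x
      = x 0 ^ 2 * (2 * Real.sin (x 2) * Real.cos (x 2)) := by
    show deriv (fun s => (Function.update x 2 s 0) ^ 2
      * Real.sin (Function.update x 2 s 2) ^ 2) (x 2) = _
    simp only [Function.update_self, Function.update_of_ne (show (0:Fin 4) ≠ 2 by decide)]
    have h := (((Real.hasDerivAt_sin (x 2)).pow 2).const_mul (x 0 ^ 2))
    have := h.deriv
    convert this using 1
    · rfl
    · norm_num
  have p33_1 : pd (fun y => y 0 ^ 2 * Real.sin (y 2) ^ 2) 1 x = 0 := by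
    show deriv (fun s => (Function.update x 1 s 0) ^ 2
      * Real.sin (Function.update x 1 s 2) ^ 2) (x 1) = _
    simp [Function.update_of_ne (show (0:Fin 4) ≠ 1 by decide),
      Function.update_of_ne (show (2:Fin 4) ≠ 1 by decide)]
  have p33_3 : pd (fun y => y 0 ^ 2 * Real.sin (y 2) ^ 2) 3 x = 0 := by
    show deriv (fun s => (Function.update x 3 s 0) ^ 2
      * Real.sin (Function.update x 3 s 2) ^ 2) (x 3) = _
    simp [Function.update_of_ne (show (0:Fin 4) ≠ 3 by decide),
      Function.update_of_ne (show (2:Fin 4) ≠ 3 by decide)]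
  -- atomic names for Q and Q'
  obtain ⟨Q, hQdef⟩ : ∃ q : ℝ, Λ * x 0 ^ 2 / 3 - 1 + 2 * m / x 0 = q := ⟨_, rfl⟩
  obtain ⟨Q', hQ'def⟩ : ∃ q : ℝ, 2 * Λ * x 0 / 3 - 2 * m / x 0 ^ 2 = q := ⟨_, rfl⟩
  have hQneQ : Q ≠ 0 := hQdef ▸ hQne
  -- defT entries
  have d00 : defT Λ m x 0 0 = -2 * x 0 * Q ^ 2 - x 0 ^ 2 * Q * Q' / 2 := by
    simp only [defT, Γsds, gInv, gSdS, Mvec, Fin.sum_univ_four]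
    simp (config := {decide := true}) only [Fin.isValue, reduceIte]
    simp only [p00_0, p00_1, p00_2, p00_3, p11_0, p11_1, p11_2, p11_3, p22_0, p22_1,
      p22_2, p22_3, pM_0, pM_1, pM_2, pM_3, p33_0, p33_1, p33_2, p33_3, pd_zero]
    try rw [hQdef]
    try rw [hQ'def]
    try field_simp [hQneQ, hx0', hs]
    try ring
  have d11 : defT Λ m x 1 1 = x 0 ^ 2 * Q' / (2 * Q) := by
    simp only [defT, Γsds, gInv, gSdS, Mvec, Fin.sum_univ_four]
    simp (config := {decide := true}) only [Fin.isValue, reduceIte]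
    simp only [p00_0, p00_1, p00_2, p00_3, p11_0, p11_1, p11_2, p11_3, p22_0, p22_1,
      p22_2, p22_3, pM_0, pM_1, pM_2, pM_3, p33_0, p33_1, p33_2, p33_3, pd_zero]
    try rw [hQdef]
    try rw [hQ'def]
    try field_simp [hQneQ, hx0', hs]
    try ring
  have d22 : defT Λ m x 2 2 = Q / x 0 := by
    simp only [defT, Γsds, gInv, gSdS, Mvec, Fin.sum_univ_four]
    simp (config := {decide := true}) only [Fin.isValue, reduceIte]
    simp only [p00_0, p00_1, p00_2, p00_3, p11_0, p11_1, p11_2, p11_3, p22_0, p22_1,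
      p22_2, p22_3, pM_0, pM_1, pM_2, pM_3, p33_0, p33_1, p33_2, p33_3, pd_zero]
    try rw [hQdef]
    try rw [hQ'def]
    try field_simp [hQneQ, hx0', hs]
    try ring
  have d33 : defT Λ m x 3 3 = Q / (x 0 * Real.sin (x 2) ^ 2) := by
    simp only [defT, Γsds, gInv, gSdS, Mvec, Fin.sum_univ_four]
    simp (config := {decide := true}) only [Fin.isValue, reduceIte]
    simp only [p00_0, p00_1, p00_2, p00_3, p11_0, p11_1, p11_2, p11_3, p22_0, p22_1,
      p22_2, p22_3, pM_0, pM_1, pM_2, pM_3, p33_0, p33_1, p33_2, p33_3, pd_zero]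
    try rw [hQdef]
    try rw [hQ'def]
    try field_simp [hQneQ, hx0', hs]
    try ring
  have d01 : defT Λ m x 0 1 = 0 := by
    simp only [defT, Γsds, gInv, gSdS, Mvec, Fin.sum_univ_four]
    simp (config := {decide := true}) only [Fin.isValue, reduceIte]
    simp only [p00_0, p00_1, p00_2, p00_3, p11_0, p11_1, p11_2, p11_3, p22_0, p22_1,
      p22_2, p22_3, pM_0, pM_1, pM_2, pM_3, p33_0, p33_1, p33_2, p33_3, pd_zero]
    try rw [hQdef]
    try rw [hQ'def]
    try field_simp [hQneQ, hx0', hs]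
    try ring
  have d02 : defT Λ m x 0 2 = 0 := by
    simp only [defT, Γsds, gInv, gSdS, Mvec, Fin.sum_univ_four]
    simp (config := {decide := true}) only [Fin.isValue, reduceIte]
    simp only [p00_0, p00_1, p00_2, p00_3, p11_0, p11_1, p11_2, p11_3, p22_0, p22_1,
      p22_2, p22_3, pM_0, pM_1, pM_2, pM_3, p33_0, p33_1, p33_2, p33_3, pd_zero]
    try rw [hQdef]
    try rw [hQ'def]
    try field_simp [hQneQ, hx0', hs]
    try ring
  have d03 : defT Λ m x 0 3 = 0 := by
    simp only [defT, Γsds, gInv, gSdS, Mvec, Fin.sum_univ_four]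
    simp (config := {decide := true}) only [Fin.isValue, reduceIte]
    simp only [p00_0, p00_1, p00_2, p00_3, p11_0, p11_1, p11_2, p11_3, p22_0, p22_1,
      p22_2, p22_3, pM_0, pM_1, pM_2, pM_3, p33_0, p33_1, p33_2, p33_3, pd_zero]
    try rw [hQdef]
    try rw [hQ'def]
    try field_simp [hQneQ, hx0', hs]
    try ring
  have d10 : defT Λ m x 1 0 = 0 := by
    simp only [defT, Γsds, gInv, gSdS, Mvec, Fin.sum_univ_four]
    simp (config := {decide := true}) only [Fin.isValue, reduceIte]
    simp only [p00_0, p00_1, p00_2, p00_3, p11_0, p11_1, p11_2, p11_3, p22_0, p22_1,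
      p22_2, p22_3, pM_0, pM_1, pM_2, pM_3, p33_0, p33_1, p33_2, p33_3, pd_zero]
    try rw [hQdef]
    try rw [hQ'def]
    try field_simp [hQneQ, hx0', hs]
    try ring
  have d12 : defT Λ m x 1 2 = 0 := by
    simp only [defT, Γsds, gInv, gSdS, Mvec, Fin.sum_univ_four]
    simp (config := {decide := true}) only [Fin.isValue, reduceIte]
    simp only [p00_0, p00_1, p00_2, p00_3, p11_0, p11_1, p11_2, p11_3, p22_0, p22_1,
      p22_2, p22_3, pM_0, pM_1, pM_2, pM_3, p33_0, p33_1, p33_2, p33_3, pd_zero]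
    try rw [hQdef]
    try rw [hQ'def]
    try field_simp [hQneQ, hx0', hs]
    try ring
  have d13 : defT Λ m x 1 3 = 0 := by
    simp only [defT, Γsds, gInv, gSdS, Mvec, Fin.sum_univ_four]
    simp (config := {decide := true}) only [Fin.isValue, reduceIte]
    simp only [p00_0, p00_1, p00_2, p00_3, p11_0, p11_1, p11_2, p11_3, p22_0, p22_1,
      p22_2, p22_3, pM_0, pM_1, pM_2, pM_3, p33_0, p33_1, p33_2, p33_3, pd_zero]
    try rw [hQdef]
    try rw [hQ'def]
    try field_simp [hQneQ, hx0', hs]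
    try ring
  have d20 : defT Λ m x 2 0 = 0 := by
    simp only [defT, Γsds, gInv, gSdS, Mvec, Fin.sum_univ_four]
    simp (config := {decide := true}) only [Fin.isValue, reduceIte]
    simp only [p00_0, p00_1, p00_2, p00_3, p11_0, p11_1, p11_2, p11_3, p22_0, p22_1,
      p22_2, p22_3, pM_0, pM_1, pM_2, pM_3, p33_0, p33_1, p33_2, p33_3, pd_zero]
    try rw [hQdef]
    try rw [hQ'def]
    try field_simp [hQneQ, hx0', hs]
    try ring
  have d21 : defT Λ m x 2 1 = 0 := by
    simp only [defT, Γsds, gInv, gSdS, Mvec, Fin.sum_univ_four]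
    simp (config := {decide := true}) only [Fin.isValue, reduceIte]
    simp only [p00_0, p00_1, p00_2, p00_3, p11_0, p11_1, p11_2, p11_3, p22_0, p22_1,
      p22_2, p22_3, pM_0, pM_1, pM_2, pM_3, p33_0, p33_1, p33_2, p33_3, pd_zero]
    try rw [hQdef]
    try rw [hQ'def]
    try field_simp [hQneQ, hx0', hs]
    try ring
  have d23 : defT Λ m x 2 3 = 0 := by
    simp only [defT, Γsds, gInv, gSdS, Mvec, Fin.sum_univ_four]
    simp (config := {decide := true}) only [Fin.isValue, reduceIte]
    simp only [p00_0, p00_1, p00_2, p00_3, p11_0, p11_1, p11_2, p11_3, p22_0, p22_1,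
      p22_2, p22_3, pM_0, pM_1, pM_2, pM_3, p33_0, p33_1, p33_2, p33_3, pd_zero]
    try rw [hQdef]
    try rw [hQ'def]
    try field_simp [hQneQ, hx0', hs]
    try ring
  have d30 : defT Λ m x 3 0 = 0 := by
    simp only [defT, Γsds, gInv, gSdS, Mvec, Fin.sum_univ_four]
    simp (config := {decide := true}) only [Fin.isValue, reduceIte]
    simp only [p00_0, p00_1, p00_2, p00_3, p11_0, p11_1, p11_2, p11_3, p22_0, p22_1,
      p22_2, p22_3, pM_0, pM_1, pM_2, pM_3, p33_0, p33_1, p33_2, p33_3, pd_zero]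
    try rw [hQdef]
    try rw [hQ'def]
    try field_simp [hQneQ, hx0', hs]
    try ring
  have d31 : defT Λ m x 3 1 = 0 := by
    simp only [defT, Γsds, gInv, gSdS, Mvec, Fin.sum_univ_four]
    simp (config := {decide := true}) only [Fin.isValue, reduceIte]
    simp only [p00_0, p00_1, p00_2, p00_3, p11_0, p11_1, p11_2, p11_3, p22_0, p22_1,
      p22_2, p22_3, pM_0, pM_1, pM_2, pM_3, p33_0, p33_1, p33_2, p33_3, pd_zero]
    try rw [hQdef]
    try rw [hQ'def]
    try field_simp [hQneQ, hx0', hs]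
    try ring
  have d32 : defT Λ m x 3 2 = 0 := by
    simp only [defT, Γsds, gInv, gSdS, Mvec, Fin.sum_univ_four]
    simp (config := {decide := true}) only [Fin.isValue, reduceIte]
    simp only [p00_0, p00_1, p00_2, p00_3, p11_0, p11_1, p11_2, p11_3, p22_0, p22_1,
      p22_2, p22_3, pM_0, pM_1, pM_2, pM_3, p33_0, p33_1, p33_2, p33_3, pd_zero]
    try rw [hQdef]
    try rw [hQ'def]
    try field_simp [hQneQ, hx0', hs]
    try ring
  have hKM0 : KM Λ m ψ x = -2 * x 0 * (pd ψ 1 x) ^ 2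
      + (-(Q / x 0) - Q' / 2) * (pd ψ 2 x) ^ 2
      + ((-(Q / x 0) - Q' / 2) / Real.sin (x 2) ^ 2) * (pd ψ 3 x) ^ 2 := by
    simp only [KM, Fin.sum_univ_four, d00, d01, d02, d03, d10, d11, d12, d13,
      d20, d21, d22, d23, d30, d31, d32, d33, stressT, gSdS, gInv]
    simp (config := {decide := true}) only [Fin.isValue, reduceIte]
    rw [hQdef]
    field_simp [hQneQ, hx0', hs]
    ring
  constructor
  · rw [hKM0, ← hQdef, ← hQ'def]
    field_simp
    ring
  · rw [hKM0]
    have hC : -(Q / x 0) - Q' / 2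
        = -((2 * Λ / 3 * x 0 ^ 2 - 1 + m / x 0) / x 0) := by
      rw [← hQdef, ← hQ'def]
      field_simp
      ring
    have hCneg : -(Q / x 0) - Q' / 2 ≤ 0 := by
      rw [hC]
      exact neg_nonpos.mpr (div_nonneg hPpos.le hx0.le)
    have h1 : -2 * x 0 * pd ψ 1 x ^ 2 ≤ 0 := by
      rw [show -2 * x 0 * pd ψ 1 x ^ 2 = -(2 * (x 0 * pd ψ 1 x ^ 2)) by ring]
      exact neg_nonpos.mpr (by positivity)
    have h2 : (-(Q / x 0) - Q' / 2) * pd ψ 2 x ^ 2 ≤ 0 :=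
      mul_nonpos_of_nonpos_of_nonneg hCneg (sq_nonneg _)
    have hsin2 : 0 < Real.sin (x 2) ^ 2 := by positivity
    have h3 : (-(Q / x 0) - Q' / 2) / Real.sin (x 2) ^ 2 * pd ψ 3 x ^ 2 ≤ 0 :=
      mul_nonpos_of_nonpos_of_nonneg (div_nonpos_of_nonpos_of_nonneg hCneg hsin2.le)
        (sq_nonneg _)
    exact add_nonpos (add_nonpos h1 h2) h3

end
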